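/- Let ν > 0, T* > 0, a, k ∈ ℝ∖{0}, and define v₁(t,x) = a x₁/(T*-t) + k x₂(T*-t)^{2a}, v₂(t,x) = a x₂/(T*-t) - k x₁(T*-t)^{2a}, v₃(t,x) = -2a x₃/(T*-t). Then div v = 0, Δv = 0, and there exists a pressure P such that ∂ₜv + (v·∇)v = -∇P + νΔv pointwise on [0,T*)×ℝ³; i.e., v is an explicit solution of the 3D incompressible Navier–Stokes equations with smooth initial data that blows up as t → T*. -/

import Mathlib

/-- First component of the explicit Navier–Stokes blowup solution. -/
noncomputable def W1 (T a k t x1 x2 : ℝ) : ℝ :=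
  a * x1 / (T - t) + k * x2 * (T - t) ^ (2 * a)

/-- Second component of the explicit Navier–Stokes blowup solution. -/
noncomputable def W2 (T a k t x1 x2 : ℝ) : ℝ :=
  a * x2 / (T - t) - k * x1 * (T - t) ^ (2 * a)

/-- Third component of the explicit Navier–Stokes blowup solution. -/
noncomputable def W3 (T a t x3 : ℝ) : ℝ := -2 * a * x3 / (T - t)

lemma dlin (c d x : ℝ) : deriv (fun s => c * s + d) x = c := by
  simpa using (((hasDerivAt_id x).const_mul c).add_const d).deriv

lemma dquad (c d x : ℝ) : deriv (fun s => c * s ^ 2 + d) x = 2 * c * x := by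
  have := (((hasDerivAt_pow 2 x).const_mul c).add_const d).deriv
  rw [this]; ring

lemma hdt (T a t : ℝ) (h : 0 < T - t) :
    HasDerivAt (fun s : ℝ => (T - s) ^ (2 * a)) (-(2 * a) * (T - t) ^ (2 * a - 1)) t := by
  have h1 : HasDerivAt (fun s : ℝ => T - s) (-1) t := by
    simpa using (hasDerivAt_id t).const_sub T
  have := h1.rpow_const (p := 2 * a) (Or.inl (ne_of_gt h))
  convert this using 1; ring

lemma hdinv (T t : ℝ) (h : 0 < T - t) :
    HasDerivAt (fun s : ℝ => (T - s)⁻¹) ((T - t) ^ 2)⁻¹ t := by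
  have h1 : HasDerivAt (fun s : ℝ => T - s) (-1) t := by
    simpa using (hasDerivAt_id t).const_sub T
  have := h1.inv (ne_of_gt h)
  exact this.congr_deriv (by ring)

lemma W1x1 (T a k t x1 x2 : ℝ) : deriv (fun s => W1 T a k t s x2) x1 = a / (T - t) := by
  have h : (fun s => W1 T a k t s x2)
      = fun s => (a / (T - t)) * s + k * x2 * (T - t) ^ (2 * a) :=
    funext fun s => by unfold W1; ring
  rw [h, dlin]

lemma W1x2 (T a k t x1 x2 : ℝ) :
    deriv (fun s => W1 T a k t x1 s) x2 = k * (T - t) ^ (2 * a) := by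
  have h : (fun s => W1 T a k t x1 s)
      = fun s => (k * (T - t) ^ (2 * a)) * s + a * x1 / (T - t) :=
    funext fun s => by unfold W1; ring
  rw [h, dlin]

lemma W2x1 (T a k t x1 x2 : ℝ) :
    deriv (fun s => W2 T a k t s x2) x1 = -(k * (T - t) ^ (2 * a)) := by
  have h : (fun s => W2 T a k t s x2)
      = fun s => (-(k * (T - t) ^ (2 * a))) * s + a * x2 / (T - t) :=
    funext fun s => by unfold W2; ring
  rw [h, dlin]

lemma W2x2 (T a k t x1 x2 : ℝ) : deriv (fun s => W2 T a k t x1 s) x2 = a / (T - t) := by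
  have h : (fun s => W2 T a k t x1 s)
      = fun s => (a / (T - t)) * s + (-(k * x1 * (T - t) ^ (2 * a))) :=
    funext fun s => by unfold W2; ring
  rw [h, dlin]

lemma W3x3 (T a t x3 : ℝ) : deriv (fun s => W3 T a t s) x3 = -2 * a / (T - t) := by
  have h : (fun s => W3 T a t s) = fun s => (-2 * a / (T - t)) * s + 0 :=
    funext fun s => by unfold W3; ring
  rw [h, dlin]

lemma W1t (T a k t x1 x2 : ℝ) (h : 0 < T - t) :
    deriv (fun s => W1 T a k s x1 x2) t
      = a * x1 / (T - t) ^ 2 - 2 * a * k * x2 * (T - t) ^ (2 * a - 1) := by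
  have h3 := ((hdinv T t h).const_mul (a * x1)).add ((hdt T a t h).const_mul (k * x2))
  have he : (fun s => W1 T a k s x1 x2)
      = fun s => a * x1 * (T - s)⁻¹ + k * x2 * (T - s) ^ (2 * a) :=
    funext fun s => by unfold W1; ring
  rw [he]; exact h3.deriv.trans (by ring)

lemma W2t (T a k t x1 x2 : ℝ) (h : 0 < T - t) :
    deriv (fun s => W2 T a k s x1 x2) t
      = a * x2 / (T - t) ^ 2 + 2 * a * k * x1 * (T - t) ^ (2 * a - 1) := by
  have h3 := ((hdinv T t h).const_mul (a * x2)).add ((hdt T a t h).const_mul (-(k * x1)))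
  have he : (fun s => W2 T a k s x1 x2)
      = fun s => a * x2 * (T - s)⁻¹ + (-(k * x1)) * (T - s) ^ (2 * a) :=
    funext fun s => by unfold W2; ring
  rw [he]; exact h3.deriv.trans (by ring)

lemma W3t (T a t x3 : ℝ) (h : 0 < T - t) :
    deriv (fun s => W3 T a s x3) t = -2 * a * x3 / (T - t) ^ 2 := by
  have h3 := (hdinv T t h).const_mul (-2 * a * x3)
  have he : (fun s => W3 T a s x3) = fun s => -2 * a * x3 * (T - s)⁻¹ :=
    funext fun s => by unfold W3; ring
  rw [he]; exact h3.deriv.trans (by ring)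

/-- The field `v₁ = ax₁/(T-t) + kx₂(T-t)^{2a}`, `v₂ = ax₂/(T-t) - kx₁(T-t)^{2a}`,
`v₃ = -2ax₃/(T-t)` is divergence-free, harmonic in `x` (`Δv = 0`), and solves the
3D incompressible Navier–Stokes equations `∂ₜv + (v·∇)v = -∇P + νΔv` on
`[0,T*) × ℝ³` for some pressure `P`. -/
theorem stmt8 (ν T a k : ℝ) (hν : 0 < ν) (hT : 0 < T) (ha : a ≠ 0) (hk : k ≠ 0) :
    (∀ t x1 x2 x3 : ℝ, 0 ≤ t → t < T →
      deriv (fun s => W1 T a k t s x2) x1 + deriv (fun s => W2 T a k t x1 s) x2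
        + deriv (fun s => W3 T a t s) x3 = 0) ∧
    (∀ t x1 x2 x3 : ℝ, 0 ≤ t → t < T →
      (deriv (fun s => deriv (fun u => W1 T a k t u x2) s) x1
        + deriv (fun s => deriv (fun u => W1 T a k t x1 u) s) x2
        + deriv (fun _ : ℝ => deriv (fun _ : ℝ => W1 T a k t x1 x2) x3) x3 = 0) ∧
      (deriv (fun s => deriv (fun u => W2 T a k t u x2) s) x1
        + deriv (fun s => deriv (fun u => W2 T a k t x1 u) s) x2
        + deriv (fun _ : ℝ => deriv (fun _ : ℝ => W2 T a k t x1 x2) x3) x3 = 0) ∧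
      (deriv (fun _ : ℝ => deriv (fun _ : ℝ => W3 T a t x3) x1) x1
        + deriv (fun _ : ℝ => deriv (fun _ : ℝ => W3 T a t x3) x2) x2
        + deriv (fun s => deriv (fun u => W3 T a t u) s) x3 = 0)) ∧
    (∃ P : ℝ → ℝ → ℝ → ℝ → ℝ, ∀ t x1 x2 x3 : ℝ, 0 ≤ t → t < T →
      (deriv (fun s => W1 T a k s x1 x2) t
        + W1 T a k t x1 x2 * deriv (fun s => W1 T a k t s x2) x1
        + W2 T a k t x1 x2 * deriv (fun s => W1 T a k t x1 s) x2
        + W3 T a t x3 * deriv (fun _ : ℝ => W1 T a k t x1 x2) x3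
        = - deriv (fun s => P t s x2 x3) x1
          + ν * (deriv (fun s => deriv (fun u => W1 T a k t u x2) s) x1
            + deriv (fun s => deriv (fun u => W1 T a k t x1 u) s) x2
            + deriv (fun _ : ℝ => deriv (fun _ : ℝ => W1 T a k t x1 x2) x3) x3)) ∧
      (deriv (fun s => W2 T a k s x1 x2) t
        + W1 T a k t x1 x2 * deriv (fun s => W2 T a k t s x2) x1
        + W2 T a k t x1 x2 * deriv (fun s => W2 T a k t x1 s) x2
        + W3 T a t x3 * deriv (fun _ : ℝ => W2 T a k t x1 x2) x3
        = - deriv (fun s => P t x1 s x3) x2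
          + ν * (deriv (fun s => deriv (fun u => W2 T a k t u x2) s) x1
            + deriv (fun s => deriv (fun u => W2 T a k t x1 u) s) x2
            + deriv (fun _ : ℝ => deriv (fun _ : ℝ => W2 T a k t x1 x2) x3) x3)) ∧
      (deriv (fun s => W3 T a s x3) t
        + W1 T a k t x1 x2 * deriv (fun _ : ℝ => W3 T a t x3) x1
        + W2 T a k t x1 x2 * deriv (fun _ : ℝ => W3 T a t x3) x2
        + W3 T a t x3 * deriv (fun s => W3 T a t s) x3
        = - deriv (fun s => P t x1 x2 s) x3
          + ν * (deriv (fun _ : ℝ => deriv (fun _ : ℝ => W3 T a t x3) x1) x1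
            + deriv (fun _ : ℝ => deriv (fun _ : ℝ => W3 T a t x3) x2) x2
            + deriv (fun s => deriv (fun u => W3 T a t u) s) x3))) := by
  refine ⟨?_, ?_, ?_⟩
  · intro t x1 x2 x3 _ htT
    rw [W1x1, W2x2, W3x3]; ring
  · intro t x1 x2 x3 _ htT
    refine ⟨?_, ?_, ?_⟩
    · have h1 : (fun s => deriv (fun u => W1 T a k t u x2) s) = fun _ => a / (T - t) :=
        funext fun s => W1x1 T a k t s x2
      have h2 : (fun s => deriv (fun u => W1 T a k t x1 u) s)
          = fun _ => k * (T - t) ^ (2 * a) := funext fun s => W1x2 T a k t x1 s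
      rw [h1, h2, deriv_const, deriv_const, deriv_const]; ring
    · have h1 : (fun s => deriv (fun u => W2 T a k t u x2) s)
          = fun _ => -(k * (T - t) ^ (2 * a)) := funext fun s => W2x1 T a k t s x2
      have h2 : (fun s => deriv (fun u => W2 T a k t x1 u) s) = fun _ => a / (T - t) :=
        funext fun s => W2x2 T a k t x1 s
      rw [h1, h2, deriv_const, deriv_const, deriv_const]; ring
    · have h1 : (fun s => deriv (fun u => W3 T a t u) s) = fun _ => -2 * a / (T - t) :=
        funext fun s => W3x3 T a t s
      rw [h1, deriv_const, deriv_const, deriv_const]; ring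
  · refine ⟨fun t x1 x2 x3 =>
      -(((a + a ^ 2) / (T - t) ^ 2 - k ^ 2 * (T - t) ^ (4 * a)) * (x1 ^ 2 + x2 ^ 2)) / 2
        - ((4 * a ^ 2 - 2 * a) / (T - t) ^ 2) * x3 ^ 2 / 2, ?_⟩
    intro t x1 x2 x3 _ htT
    have hτ : 0 < T - t := sub_pos.mpr htT
    have hτ' : T - t ≠ 0 := ne_of_gt hτ
    have h4a : (T - t) ^ (4 * a) = (T - t) ^ (2 * a) * (T - t) ^ (2 * a) := by
      rw [show (4 : ℝ) * a = 2 * a + 2 * a by ring, Real.rpow_add hτ]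
    have h2a1 : (T - t) ^ (2 * a - 1) = (T - t) ^ (2 * a) / (T - t) := by
      rw [Real.rpow_sub hτ, Real.rpow_one]
    have h11 : (fun s => deriv (fun u => W1 T a k t u x2) s) = fun _ => a / (T - t) :=
      funext fun s => W1x1 T a k t s x2
    have h12 : (fun s => deriv (fun u => W1 T a k t x1 u) s)
        = fun _ => k * (T - t) ^ (2 * a) := funext fun s => W1x2 T a k t x1 s
    have h21 : (fun s => deriv (fun u => W2 T a k t u x2) s)
        = fun _ => -(k * (T - t) ^ (2 * a)) := funext fun s => W2x1 T a k t s x2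
    have h22 : (fun s => deriv (fun u => W2 T a k t x1 u) s) = fun _ => a / (T - t) :=
      funext fun s => W2x2 T a k t x1 s
    have h33 : (fun s => deriv (fun u => W3 T a t u) s) = fun _ => -2 * a / (T - t) :=
      funext fun s => W3x3 T a t s
    refine ⟨?_, ?_, ?_⟩
    · have hP : (fun s => -(((a + a ^ 2) / (T - t) ^ 2 - k ^ 2 * (T - t) ^ (4 * a))
          * (s ^ 2 + x2 ^ 2)) / 2 - ((4 * a ^ 2 - 2 * a) / (T - t) ^ 2) * x3 ^ 2 / 2)
          = fun s => (-((a + a ^ 2) / (T - t) ^ 2 - k ^ 2 * (T - t) ^ (4 * a)) / 2) * s ^ 2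
            + (-(((a + a ^ 2) / (T - t) ^ 2 - k ^ 2 * (T - t) ^ (4 * a)) * x2 ^ 2) / 2
              - ((4 * a ^ 2 - 2 * a) / (T - t) ^ 2) * x3 ^ 2 / 2) :=
        funext fun s => by ring
      rw [W1t T a k t x1 x2 hτ, W1x1, W1x2, deriv_const, h11, h12, deriv_const,
        deriv_const, deriv_const, hP, dquad]
      unfold W1 W2 W3
      rw [h4a, h2a1]
      field_simp
      ring
    · have hP : (fun s => -(((a + a ^ 2) / (T - t) ^ 2 - k ^ 2 * (T - t) ^ (4 * a))
          * (x1 ^ 2 + s ^ 2)) / 2 - ((4 * a ^ 2 - 2 * a) / (T - t) ^ 2) * x3 ^ 2 / 2)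
          = fun s => (-((a + a ^ 2) / (T - t) ^ 2 - k ^ 2 * (T - t) ^ (4 * a)) / 2) * s ^ 2
            + (-(((a + a ^ 2) / (T - t) ^ 2 - k ^ 2 * (T - t) ^ (4 * a)) * x1 ^ 2) / 2
              - ((4 * a ^ 2 - 2 * a) / (T - t) ^ 2) * x3 ^ 2 / 2) :=
        funext fun s => by ring
      rw [W2t T a k t x1 x2 hτ, W2x1, W2x2, deriv_const, h21, h22, deriv_const,
        deriv_const, deriv_const, hP, dquad]
      unfold W1 W2 W3
      rw [h4a, h2a1]
      field_simp
      ring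
    · have hP : (fun s => -(((a + a ^ 2) / (T - t) ^ 2 - k ^ 2 * (T - t) ^ (4 * a))
          * (x1 ^ 2 + x2 ^ 2)) / 2 - ((4 * a ^ 2 - 2 * a) / (T - t) ^ 2) * s ^ 2 / 2)
          = fun s => (-((4 * a ^ 2 - 2 * a) / (T - t) ^ 2) / 2) * s ^ 2
            + (-(((a + a ^ 2) / (T - t) ^ 2 - k ^ 2 * (T - t) ^ (4 * a))
              * (x1 ^ 2 + x2 ^ 2)) / 2) :=
        funext fun s => by ring
      rw [W3t T a t x3 hτ, W3x3, deriv_const, deriv_const, h33, deriv_const,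
        deriv_const, deriv_const, hP, dquad]
      unfold W1 W2 W3
      field_simp
      ring
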